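/- Let g ∈ H↑ (a nondecreasing ℕ-valued weight function) and let f be an unbounded modulus function. Set k_0 = 0 and, for m ≥ 1, k_m = min{k ∈ ℕ : f(g(k)) ≥ 2^m}. Then Z_g(f) = {C ⊆ ℕ : lim_{m→∞} f(|C ∩ [k_m, k_{m+1})|)/f(g(k_m)) = 0}. -/

import Mathlib

open Filter Topology

/-- `cnt C k` is the number of elements of `C` in `[0, k-1]`. -/
noncomputable def cnt (C : Set ℕ) (k : ℕ) : ℕ := (C ∩ Set.Iio k).ncard

/-- A modulus function `f : [0,∞) → [0,∞)`: nonnegative, increasing, subadditive,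
vanishing exactly at `0`, and right continuous at `0`. -/
def IsModulus (f : ℝ → ℝ) : Prop :=
  (∀ x, 0 ≤ x → 0 ≤ f x) ∧ MonotoneOn f (Set.Ici 0) ∧
  (∀ x y, 0 ≤ x → 0 ≤ y → f (x + y) ≤ f x + f y) ∧
  (∀ x, 0 ≤ x → (f x = 0 ↔ x = 0)) ∧ ContinuousWithinAt f (Set.Ici 0) 0

/-- `f` is unbounded on `[0,∞)`. -/
def IsUnboundedMod (f : ℝ → ℝ) : Prop := ∀ M : ℝ, ∃ x : ℝ, 0 ≤ x ∧ M < f x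

/-- `H↑`: nondecreasing `ℕ`-valued weight functions, i.e. monotone `g : ℕ → ℕ`
with `g(k) → ∞` and `k / g(k)` not converging to `0`. -/
def InHup (g : ℕ → ℕ) : Prop :=
  Monotone g ∧ Tendsto g atTop atTop ∧
  ¬ Tendsto (fun k : ℕ => (k : ℝ) / (g k : ℝ)) atTop (nhds 0)

/-- The modular simple density ideal `Z_g(f)` for a `ℕ`-valued weight function. -/
def ZgfN (f : ℝ → ℝ) (g : ℕ → ℕ) : Set (Set ℕ) :=
  {C | Tendsto (fun k => f (cnt C k) / f (g k : ℝ)) atTop (nhds 0)}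

lemma cnt_fin (C : Set ℕ) (k : ℕ) : (C ∩ Set.Iio k).Finite :=
  (Set.finite_Iio k).inter_of_right C

lemma cnt_mono (C : Set ℕ) : Monotone (cnt C) := fun a b hab =>
  Set.ncard_le_ncard (Set.inter_subset_inter_right C (Set.Iio_subset_Iio hab)) (cnt_fin C b)

lemma cnt_split (C : Set ℕ) (a b : ℕ) :
    cnt C b ≤ cnt C a + (C ∩ Set.Ico a b).ncard := by
  have hsub : C ∩ Set.Iio b ⊆ (C ∩ Set.Iio a) ∪ (C ∩ Set.Ico a b) := by
    rintro n ⟨hn, hnb⟩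
    rcases lt_or_ge n a with h | h
    · exact Or.inl ⟨hn, h⟩
    · exact Or.inr ⟨hn, h, hnb⟩
  calc cnt C b ≤ ((C ∩ Set.Iio a) ∪ (C ∩ Set.Ico a b)).ncard :=
        Set.ncard_le_ncard hsub ((cnt_fin C a).union ((Set.finite_Ico a b).inter_of_right C))
    _ ≤ _ := Set.ncard_union_le _ _

lemma ico_ncard_le_cnt (C : Set ℕ) (a b : ℕ) :
    (C ∩ Set.Ico a b).ncard ≤ cnt C b :=
  Set.ncard_le_ncard (Set.inter_subset_inter_right C Set.Ico_subset_Iio_self) (cnt_fin C b)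

lemma cnt_succ_le (C : Set ℕ) (k : ℕ) : cnt C (k + 1) ≤ cnt C k + 1 := by
  have h := cnt_split C k (k + 1)
  have h2 : (C ∩ Set.Ico k (k + 1)).ncard ≤ 1 := by
    have : C ∩ Set.Ico k (k + 1) ⊆ {k} := by
      rintro n ⟨_, h1, h2⟩
      simp only [Set.mem_singleton_iff]
      omega
    calc (C ∩ Set.Ico k (k + 1)).ncard ≤ ({k} : Set ℕ).ncard :=
          Set.ncard_le_ncard this (Set.finite_singleton k)
      _ = 1 := Set.ncard_singleton k
  omega

lemma sum_two_pow (n : ℕ) : ∑ i ∈ Finset.range n, (2 : ℝ) ^ i ≤ 2 ^ n := by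
  induction n with
  | zero => simp
  | succ n ih =>
    rw [Finset.sum_range_succ]
    have h : (2 : ℝ) ^ (n + 1) = 2 ^ n + 2 ^ n := by ring
    rw [h]; linarith

lemma modulus_sum_le (f : ℝ → ℝ) (hf : IsModulus f) (x : ℕ → ℝ) (hx : ∀ j, 0 ≤ x j)
    (n : ℕ) : f (∑ j ∈ Finset.range n, x j) ≤ ∑ j ∈ Finset.range n, f (x j) := by
  induction n with
  | zero => simp [(hf.2.2.2.1 0 le_rfl).mpr rfl]
  | succ n ih =>
    rw [Finset.sum_range_succ, Finset.sum_range_succ]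
    calc f (∑ j ∈ Finset.range n, x j + x n)
        ≤ f (∑ j ∈ Finset.range n, x j) + f (x n) :=
          hf.2.2.1 _ _ (Finset.sum_nonneg fun j _ => hx j) (hx n)
      _ ≤ _ := by linarith

theorem stmt9 (f : ℝ → ℝ) (g : ℕ → ℕ) (hf : IsModulus f) (hfu : IsUnboundedMod f)
    (hg : InHup g) (kk : ℕ → ℕ) (hkk0 : kk 0 = 0)
    (hkk : ∀ m : ℕ, 1 ≤ m → kk m = sInf {k : ℕ | (2 : ℝ) ^ m ≤ f (g k : ℝ)}) :
    ZgfN f g =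
      {C : Set ℕ |
        Tendsto
          (fun m => f (((C ∩ Set.Ico (kk m) (kk (m + 1))).ncard : ℝ)) / f (g (kk m) : ℝ))
          atTop (nhds 0)} := by
  have hf0 : ∀ x : ℝ, 0 ≤ x → 0 ≤ f x := hf.1
  have hfsub := hf.2.2.1
  have hf0' : f 0 = 0 := (hf.2.2.2.1 0 le_rfl).mpr rfl
  have hfm : ∀ a b : ℝ, 0 ≤ a → a ≤ b → f a ≤ f b := fun a b ha hab =>
    hf.2.1 ha (ha.trans hab) hab
  have hgmono := hg.1
  -- f (g k) → ∞
  have hfg : Tendsto (fun k => f (g k : ℝ)) atTop atTop := by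
    rw [tendsto_atTop]
    intro M
    obtain ⟨x, hx0, hMx⟩ := hfu M
    filter_upwards [hg.2.1.eventually_ge_atTop ⌈x⌉₊] with k hk
    have hx : x ≤ (g k : ℝ) := (Nat.le_ceil x).trans (Nat.cast_le.mpr hk)
    exact hMx.le.trans (hfm x _ hx0 hx)
  have hmem : ∀ m, 1 ≤ m → (2 : ℝ) ^ m ≤ f (g (kk m) : ℝ) := by
    intro m hm
    have hne : {k : ℕ | (2 : ℝ) ^ m ≤ f (g k : ℝ)}.Nonempty :=
      (hfg.eventually_ge_atTop ((2 : ℝ) ^ m)).exists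
    have h := Nat.sInf_mem hne
    rw [← hkk m hm] at h
    exact h
  have hlt : ∀ m, 1 ≤ m → ∀ k, k < kk m → f (g k : ℝ) < (2 : ℝ) ^ m := by
    intro m hm k hk
    by_contra h
    push_neg at h
    have h2 : kk m ≤ k := by
      rw [hkk m hm]
      exact Nat.sInf_le h
    omega
  have hfgpos : ∀ m, 1 ≤ m → 0 < f (g (kk m) : ℝ) := fun m hm =>
    lt_of_lt_of_le (pow_pos two_pos m) (hmem m hm)
  have hge : ∀ m, 1 ≤ m → ∀ k, kk m ≤ k → (2 : ℝ) ^ m ≤ f (g k : ℝ) := fun m hm k hk =>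
    (hmem m hm).trans (hfm _ _ (Nat.cast_nonneg _) (Nat.cast_le.mpr (hgmono hk)))
  have hkkmono : Monotone kk := by
    apply monotone_nat_of_le_succ
    intro m
    rcases Nat.eq_zero_or_pos m with rfl | hm
    · simp [hkk0]
    · rw [hkk m hm]
      refine Nat.sInf_le ?_
      have h1 : (2 : ℝ) ^ m ≤ (2 : ℝ) ^ (m + 1) := by
        have : (2 : ℝ) ^ (m + 1) = 2 ^ m * 2 := pow_succ 2 m
        nlinarith [pow_pos (show (0:ℝ) < 2 by norm_num) m]
      exact h1.trans (hmem (m + 1) (by omega))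
  have hkktop : Tendsto kk atTop atTop := by
    rw [tendsto_atTop]
    intro b
    have h2 : Tendsto (fun m : ℕ => (2 : ℝ) ^ m) atTop atTop :=
      tendsto_pow_atTop_atTop_of_one_lt one_lt_two
    filter_upwards [h2.eventually_gt_atTop (f (g b : ℝ)), eventually_ge_atTop 1] with m h1 hm
    by_contra h
    push_neg at h
    have h3 : f (g (kk m) : ℝ) ≤ f (g b : ℝ) :=
      hfm _ _ (Nat.cast_nonneg _) (Nat.cast_le.mpr (hgmono h.le))
    have := hmem m hm
    linarith
  ext C
  simp only [ZgfN, Set.mem_setOf_eq]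
  constructor
  · -- forward direction
    intro hC
    rw [Metric.tendsto_atTop]
    intro ε hε
    have h1 : Tendsto (fun k => f 1 / f (g k : ℝ)) atTop (nhds 0) :=
      tendsto_const_nhds.div_atTop hfg
    have hsum : Tendsto (fun k => f (cnt C k : ℝ) / f (g k : ℝ) + f 1 / f (g k : ℝ))
        atTop (nhds 0) := by
      have := hC.add h1
      simpa using this
    have hev : ∀ᶠ k in atTop,
        (f (cnt C k : ℝ) / f (g k : ℝ) + f 1 / f (g k : ℝ) < ε / 2) ∧ 0 < f (g k : ℝ) := by
      filter_upwards [hsum.eventually_lt_const (by linarith : (0:ℝ) < ε / 2),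
        hfg.eventually_gt_atTop 0] with k hk1 hk2
      exact ⟨hk1, hk2⟩
    obtain ⟨K, hK⟩ := eventually_atTop.mp hev
    have hev2 : ∀ᶠ m in atTop,
        dist (f (((C ∩ Set.Ico (kk m) (kk (m + 1))).ncard : ℝ)) / f (g (kk m) : ℝ)) 0 < ε := by
      filter_upwards [hkktop.eventually_ge_atTop (K + 1), eventually_ge_atTop 1] with m hmK hm1
      have hpos : 0 < f (g (kk m) : ℝ) := hfgpos m hm1
      have hnn : 0 ≤ f (((C ∩ Set.Ico (kk m) (kk (m + 1))).ncard : ℝ)) / f (g (kk m) : ℝ) :=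
        div_nonneg (hf0 _ (Nat.cast_nonneg _)) hpos.le
      rw [Real.dist_eq, sub_zero, abs_of_nonneg hnn, div_lt_iff₀ hpos]
      rcases le_or_gt (kk (m + 1)) (kk m) with hle | hlt2
      · have hemp : C ∩ Set.Ico (kk m) (kk (m + 1)) = ∅ := by
          rw [Set.Ico_eq_empty (not_lt.mpr hle), Set.inter_empty]
        rw [hemp]
        simpa [hf0'] using mul_pos hε hpos
      · set k := kk (m + 1) - 1 with hkdef
        have hk1 : kk (m + 1) = k + 1 := by omega
        have hkm : kk m ≤ k := by omega
        have hkK : K ≤ k := by omega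
        obtain ⟨hdiv, hgpos⟩ := hK k hkK
        have hc1 : (C ∩ Set.Ico (kk m) (kk (m + 1))).ncard ≤ cnt C k + 1 := by
          calc (C ∩ Set.Ico (kk m) (kk (m + 1))).ncard ≤ cnt C (kk (m + 1)) :=
                ico_ncard_le_cnt C _ _
            _ = cnt C (k + 1) := by rw [hk1]
            _ ≤ cnt C k + 1 := cnt_succ_le C k
        have hfc : f (((C ∩ Set.Ico (kk m) (kk (m + 1))).ncard : ℝ)) ≤
            f (cnt C k : ℝ) + f 1 := by
          have hcle : (((C ∩ Set.Ico (kk m) (kk (m + 1))).ncard : ℝ)) ≤ (cnt C k : ℝ) + 1 := by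
            exact_mod_cast hc1
          calc f (((C ∩ Set.Ico (kk m) (kk (m + 1))).ncard : ℝ))
              ≤ f ((cnt C k : ℝ) + 1) := hfm _ _ (Nat.cast_nonneg _) hcle
            _ ≤ f (cnt C k : ℝ) + f 1 := hfsub _ _ (Nat.cast_nonneg _) zero_le_one
        have hb : f (cnt C k : ℝ) + f 1 < (ε / 2) * f (g k : ℝ) := by
          rw [← add_div, div_lt_iff₀ hgpos] at hdiv
          linarith
        have hgk : f (g k : ℝ) < 2 ^ (m + 1) := hlt (m + 1) (by omega) k (by omega)
        have h2m : (2 : ℝ) ^ m ≤ f (g (kk m) : ℝ) := hmem m hm1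
        calc f (((C ∩ Set.Ico (kk m) (kk (m + 1))).ncard : ℝ))
            ≤ f (cnt C k : ℝ) + f 1 := hfc
          _ < (ε / 2) * f (g k : ℝ) := hb
          _ < (ε / 2) * 2 ^ (m + 1) := by
              have := half_pos hε
              nlinarith
          _ = ε * 2 ^ m := by rw [pow_succ]; ring
          _ ≤ ε * f (g (kk m) : ℝ) := mul_le_mul_of_nonneg_left h2m hε.le
    exact eventually_atTop.mp hev2
  · -- backward direction
    intro hC
    have hcnt_sum : ∀ m, cnt C (kk m) ≤
        ∑ j ∈ Finset.range m, (C ∩ Set.Ico (kk j) (kk (j + 1))).ncard := by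
      intro m
      induction m with
      | zero =>
        have hemp : C ∩ Set.Iio 0 = ∅ := by
          ext n; simp
        simp [cnt, hkk0, hemp]
      | succ m ih =>
        rw [Finset.sum_range_succ]
        have := cnt_split C (kk m) (kk (m + 1))
        omega
    rw [Metric.tendsto_atTop]
    intro ε hε
    obtain ⟨J0, hJ0⟩ := eventually_atTop.mp
      (hC.eventually_lt_const (by linarith : (0:ℝ) < ε / 8))
    set J := max J0 1 with hJdef
    have hJ1 : 1 ≤ J := le_max_right _ _
    set F : ℕ → ℝ := fun j => f (((C ∩ Set.Ico (kk j) (kk (j + 1))).ncard : ℝ)) with hF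
    have hFnn : ∀ j, 0 ≤ F j := fun j => hf0 _ (Nat.cast_nonneg _)
    have hfcj : ∀ j, J ≤ j → F j ≤ (ε / 8) * 2 ^ (j + 1) := by
      intro j hj
      have hj1 : 1 ≤ j := hJ1.trans hj
      rcases le_or_gt (kk (j + 1)) (kk j) with hle | hlt2
      · have hemp : C ∩ Set.Ico (kk j) (kk (j + 1)) = ∅ := by
          rw [Set.Ico_eq_empty (not_lt.mpr hle), Set.inter_empty]
        have : F j = 0 := by simp [hF, hemp, hf0']
        rw [this]
        positivity
      · have hpos := hfgpos j hj1
        have hdiv := hJ0 j (le_trans (le_max_left _ _) hj)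
        rw [div_lt_iff₀ hpos] at hdiv
        have hgkk : f (g (kk j) : ℝ) < 2 ^ (j + 1) := hlt (j + 1) (by omega) (kk j) hlt2
        have h8 : (0:ℝ) < ε / 8 := by linarith
        calc F j ≤ (ε / 8) * f (g (kk j) : ℝ) := hdiv.le
          _ ≤ (ε / 8) * 2 ^ (j + 1) := by nlinarith
    set B := ∑ j ∈ Finset.range J, F j with hB
    have hB0 : 0 ≤ B := Finset.sum_nonneg fun j _ => hFnn j
    -- choose N ≥ J with B < (ε/2) * 2^N
    obtain ⟨N0, hN0⟩ := exists_nat_gt (B / (ε / 2))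
    set N := max N0 J with hNdef
    have hNJ : J ≤ N := le_max_right _ _
    have hN1 : 1 ≤ N := hJ1.trans hNJ
    have hBN : B < (ε / 2) * 2 ^ N := by
      have h1 : B / (ε / 2) < (N0 : ℝ) := hN0
      have h2 : (N0 : ℝ) ≤ (N : ℝ) := Nat.cast_le.mpr (le_max_left _ _)
      have h3 : (N : ℝ) < 2 ^ N := by
        exact_mod_cast (Nat.lt_two_pow_self (n := N))
      have h4 : (0:ℝ) < ε / 2 := by linarith
      rw [div_lt_iff₀ h4] at h1
      nlinarith
    refine ⟨kk N, fun k hk => ?_⟩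
    -- find m with kk m ≤ k < kk (m+1), N ≤ m
    have hTN : N ∈ {m | kk m ≤ k} := hk
    obtain ⟨M, hM⟩ := eventually_atTop.mp (hkktop.eventually_ge_atTop (k + 1))
    have hbdd : BddAbove {m | kk m ≤ k} := by
      refine ⟨M, fun m hm => ?_⟩
      by_contra h
      push_neg at h
      have := hM m h.le
      simp only [Set.mem_setOf_eq] at hm
      omega
    set m := sSup {m | kk m ≤ k} with hmdef
    have hmT : kk m ≤ k := Nat.sSup_mem ⟨N, hTN⟩ hbdd
    have hNm : N ≤ m := le_csSup hbdd hTN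
    have hkm1 : k < kk (m + 1) := by
      by_contra h
      push_neg at h
      have hmem1 : m + 1 ∈ {m | kk m ≤ k} := h
      have := le_csSup hbdd hmem1
      omega
    have hm1 : 1 ≤ m := hN1.trans hNm
    have hJm : J ≤ m + 1 := by omega
    -- main estimate
    have hcle : (cnt C k : ℝ) ≤ ∑ j ∈ Finset.range (m + 1),
        (((C ∩ Set.Ico (kk j) (kk (j + 1))).ncard : ℝ)) := by
      have h1 : cnt C k ≤ cnt C (kk (m + 1)) := cnt_mono C hkm1.le
      have h2 := hcnt_sum (m + 1)
      have h3 : cnt C k ≤ ∑ j ∈ Finset.range (m + 1),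
          (C ∩ Set.Ico (kk j) (kk (j + 1))).ncard := h1.trans h2
      calc (cnt C k : ℝ) ≤ ((∑ j ∈ Finset.range (m + 1),
            (C ∩ Set.Ico (kk j) (kk (j + 1))).ncard : ℕ) : ℝ) := Nat.cast_le.mpr h3
        _ = _ := by push_cast; rfl
    have hfc : f (cnt C k : ℝ) ≤ ∑ j ∈ Finset.range (m + 1), F j := by
      calc f (cnt C k : ℝ)
          ≤ f (∑ j ∈ Finset.range (m + 1),
              (((C ∩ Set.Ico (kk j) (kk (j + 1))).ncard : ℝ))) :=
            hfm _ _ (Nat.cast_nonneg _)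
              hcle
        _ ≤ _ := modulus_sum_le f hf _ (fun j => Nat.cast_nonneg _) (m + 1)
    have hsplit : ∑ j ∈ Finset.range (m + 1), F j = B + ∑ j ∈ Finset.Ico J (m + 1), F j := by
      rw [hB, Finset.range_eq_Ico, ← Finset.sum_Ico_consecutive F (Nat.zero_le J) hJm,
        ← Finset.range_eq_Ico]
    have htail : ∑ j ∈ Finset.Ico J (m + 1), F j ≤ (ε / 2) * 2 ^ m := by
      calc ∑ j ∈ Finset.Ico J (m + 1), F j
          ≤ ∑ j ∈ Finset.Ico J (m + 1), (ε / 8) * 2 ^ (j + 1) :=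
            Finset.sum_le_sum fun j hj => hfcj j (Finset.mem_Ico.mp hj).1
        _ ≤ ∑ j ∈ Finset.range (m + 1), (ε / 8) * 2 ^ (j + 1) := by
            apply Finset.sum_le_sum_of_subset_of_nonneg
            · rw [Finset.range_eq_Ico]
              exact Finset.Ico_subset_Ico (Nat.zero_le J) le_rfl
            · intro j _ _
              positivity
        _ = (ε / 4) * ∑ j ∈ Finset.range (m + 1), (2:ℝ) ^ j := by
            rw [Finset.mul_sum]
            apply Finset.sum_congr rfl
            intro j _
            rw [pow_succ]
            ring
        _ ≤ (ε / 4) * 2 ^ (m + 1) := by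
            have := sum_two_pow (m + 1)
            have h4 : (0:ℝ) < ε / 4 := by linarith
            nlinarith
        _ = (ε / 2) * 2 ^ m := by rw [pow_succ]; ring
    have h2Nm : (2:ℝ) ^ N ≤ 2 ^ m := by
      apply pow_le_pow_right₀ one_le_two hNm
    have hfgk : (2:ℝ) ^ m ≤ f (g k : ℝ) := hge m hm1 k hmT
    have hfgkpos : 0 < f (g k : ℝ) := lt_of_lt_of_le (pow_pos two_pos m) hfgk
    have hfin : f (cnt C k : ℝ) < ε * f (g k : ℝ) := by
      have h2mpos : (0:ℝ) < 2 ^ m := pow_pos two_pos m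
      calc f (cnt C k : ℝ) ≤ B + (ε / 2) * 2 ^ m := by
            rw [hsplit] at hfc
            linarith
        _ < (ε / 2) * 2 ^ N + (ε / 2) * 2 ^ m := by linarith
        _ ≤ (ε / 2) * 2 ^ m + (ε / 2) * 2 ^ m := by nlinarith
        _ = ε * 2 ^ m := by ring
        _ ≤ ε * f (g k : ℝ) := mul_le_mul_of_nonneg_left hfgk hε.le
    have hnn : 0 ≤ f (cnt C k : ℝ) / f (g k : ℝ) :=
      div_nonneg (hf0 _ (Nat.cast_nonneg _)) hfgkpos.le
    rw [Real.dist_eq, sub_zero, abs_of_nonneg hnn, div_lt_iff₀ hfgkpos]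
    exact hfin
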